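/- For x ∈ dom(F) and α > 0, the following are equivalent: (a) x is a weakly Pareto optimal point of min F; (b) θ_α(x) = 0; (c) p_α(x) = x. -/

import Mathlib

open RealInnerProductSpace Filter Topology

lemma line_hasDerivAt {n : ℕ} (x v : EuclideanSpace ℝ (Fin n)) (t : ℝ) :
    HasDerivAt (fun s : ℝ => x + s • v) v t := by
  simpa using ((hasDerivAt_id t).smul_const v).const_add x

lemma comp_hasDerivAt {n : ℕ} {G : EuclideanSpace ℝ (Fin n) → ℝ}
    {g : EuclideanSpace ℝ (Fin n)} (x v : EuclideanSpace ℝ (Fin n))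
    (hg : HasGradientAt G g x) :
    HasDerivAt (fun t : ℝ => G (x + t • v)) ⟪g, v⟫ 0 := by
  have hF : HasFDerivAt G ((InnerProductSpace.toDual ℝ _) g) x :=
    hasGradientAt_iff_hasFDerivAt.mp hg
  have hx0 : x = (fun s : ℝ => x + s • v) 0 := by simp
  rw [hx0] at hF
  have h := hF.comp_hasDerivAt (0:ℝ) (line_hasDerivAt x v 0)
  simp only [InnerProductSpace.toDual_apply_apply] at h
  exact h

/-- gradient inequality for convex functions -/
lemma grad_ineq {n : ℕ} {G : EuclideanSpace ℝ (Fin n) → ℝ}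
    {g : EuclideanSpace ℝ (Fin n)} (hc : ConvexOn ℝ Set.univ G)
    (x y : EuclideanSpace ℝ (Fin n)) (hg : HasGradientAt G g x) :
    ⟪g, y - x⟫ ≤ G y - G x := by
  have hD := comp_hasDerivAt x (y - x) hg
  have hslope := hasDerivAt_iff_tendsto_slope.mp hD
  have hmono : 𝓝[>] (0:ℝ) ≤ 𝓝[≠] (0:ℝ) :=
    nhdsWithin_mono _ (fun t ht => ne_of_gt ht)
  refine le_of_tendsto (hslope.mono_left hmono) ?_
  filter_upwards [self_mem_nhdsWithin, Ioo_mem_nhdsGT_of_mem (by norm_num : (0:ℝ) ∈ Set.Ico 0 1)] with t ht ht1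
  have ht0 : (0:ℝ) < t := ht
  have hconv : G (x + t • (y - x)) ≤ (1 - t) * G x + t * G y := by
    have := hc.2 (Set.mem_univ x) (Set.mem_univ y)
      (by linarith [ht1.2] : (0:ℝ) ≤ 1 - t) (le_of_lt ht0) (by ring)
    have hpt : (1 - t) • x + t • y = x + t • (y - x) := by
      module
    rw [hpt] at this
    simpa [smul_eq_mul] using this
  rw [slope_def_field]
  have : (G (x + t • (y - x)) - G (x + (0:ℝ) • (y - x))) / (t - 0) ≤ G y - G x := by
    rw [sub_zero, div_le_iff₀ ht0]
    simp only [zero_smul, add_zero]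
    nlinarith
  simpa [slope, zero_smul] using this

lemma eventually_lt_of_deriv_neg' {f : ℝ → ℝ} {d : ℝ} (hf : HasDerivAt f d 0)
    (hd : d < 0) : ∀ᶠ t in 𝓝[>] (0:ℝ), f t < f 0 := by
  have hslope := hasDerivAt_iff_tendsto_slope.mp hf
  have hmono : 𝓝[>] (0:ℝ) ≤ 𝓝[≠] (0:ℝ) :=
    nhdsWithin_mono _ (fun t ht => ne_of_gt ht)
  have hev : ∀ᶠ t in 𝓝[>] (0:ℝ), slope f 0 t < 0 :=
    (hslope.mono_left hmono).eventually (Filter.Tendsto.eventually_lt_const hd tendsto_id) |>.mono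
      fun t ht => ht
  filter_upwards [hev, self_mem_nhdsWithin] with t ht ht0
  have ht0' : (0:ℝ) < t := ht0
  rw [slope_def_field, sub_zero, div_neg_iff] at ht
  rcases ht with ⟨h1, h2⟩ | ⟨h1, h2⟩
  · linarith
  · linarith

set_option maxHeartbeats 1000000 in
/-- For `x ∈ dom F` and `α > 0`, the following are equivalent:
(a) `x` is weakly Pareto optimal for `min F`; (b) `θ_α(x) = 0`; (c) `p_α(x) = x`. -/
theorem weakPareto_characterization {n m : ℕ} (hm : 0 < m)
    (G : Fin m → EuclideanSpace ℝ (Fin n) → ℝ)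
    (G' : Fin m → EuclideanSpace ℝ (Fin n) → EuclideanSpace ℝ (Fin n))
    (H : Fin m → EuclideanSpace ℝ (Fin n) → ℝ)
    (dom : Set (EuclideanSpace ℝ (Fin n)))
    (hGconv : ∀ j, ConvexOn ℝ Set.univ (G j))
    (hGdiff : ∀ j x, HasGradientAt (G j) (G' j x) x)
    (hHconv : ∀ j, ConvexOn ℝ dom (H j))
    (hHcont : ∀ j, ContinuousOn (H j) dom)
    (hdomne : dom.Nonempty) (hdomcl : IsClosed dom) (hdomconv : Convex ℝ dom)
    (x : EuclideanSpace ℝ (Fin n)) (hx : x ∈ dom)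
    (α : ℝ) (hα : 0 < α)
    (p : EuclideanSpace ℝ (Fin n)) (hp : p ∈ dom)
    (hpmin : IsMinOn
      (fun u => (⨆ j, (⟪G' j x, u - x⟫ + H j u - H j x)) + 1 / (2 * α) * ‖u - x‖ ^ 2)
      dom p) :
    ((¬ ∃ y ∈ dom, ∀ j, G j y + H j y < G j x + H j x) ↔
      (⨆ j, (⟪G' j x, p - x⟫ + H j p - H j x)) + 1 / (2 * α) * ‖p - x‖ ^ 2 = 0) ∧
    (((⨆ j, (⟪G' j x, p - x⟫ + H j p - H j x)) + 1 / (2 * α) * ‖p - x‖ ^ 2 = 0) ↔ p = x) := by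
  haveI : Nonempty (Fin m) := ⟨⟨0, hm⟩⟩
  have hbdd : ∀ u : EuclideanSpace ℝ (Fin n),
      BddAbove (Set.range fun j => ⟪G' j x, u - x⟫ + H j u - H j x) :=
    fun u => (Set.finite_range _).bddAbove
  have hmin : ∀ u ∈ dom,
      (⨆ j, (⟪G' j x, p - x⟫ + H j p - H j x)) + 1 / (2 * α) * ‖p - x‖ ^ 2 ≤
      (⨆ j, (⟪G' j x, u - x⟫ + H j u - H j x)) + 1 / (2 * α) * ‖u - x‖ ^ 2 :=
    fun u hu => isMinOn_iff.mp hpmin u hu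
  have hψ0 : ∀ u : EuclideanSpace ℝ (Fin n),
      (⨆ j, (⟪G' j x, x - x⟫ + H j x - H j x)) = 0 := by
    intro u; simp [ciSup_const]
  have hθle : (⨆ j, (⟪G' j x, p - x⟫ + H j p - H j x)) + 1 / (2 * α) * ‖p - x‖ ^ 2 ≤ 0 := by
    have h1 := hmin x hx
    have h2 := hψ0 x
    simp only [h2] at h1
    simpa using h1
  have hquadpos : (0:ℝ) < 1 / (2 * α) := by positivity
  -- (c) → (b)
  have hcb : p = x →
      (⨆ j, (⟪G' j x, p - x⟫ + H j p - H j x)) + 1 / (2 * α) * ‖p - x‖ ^ 2 = 0 := by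
    intro h
    rw [h]
    have h2 := hψ0 x
    simp [h2]
  -- (b) → (c)
  have hbc : (⨆ j, (⟪G' j x, p - x⟫ + H j p - H j x)) + 1 / (2 * α) * ‖p - x‖ ^ 2 = 0
      → p = x := by
    intro hθ
    by_contra hpx
    have hpx' : (0:ℝ) < ‖p - x‖ := by
      rwa [norm_pos_iff, sub_ne_zero]
    obtain ⟨md, hmd⟩ : ∃ md : EuclideanSpace ℝ (Fin n),
        md = (1/2 : ℝ) • p + (1/2 : ℝ) • x := ⟨_, rfl⟩
    have hmdmem : md ∈ dom := by
      rw [hmd]; exact hdomconv hp hx (by norm_num) (by norm_num) (by norm_num)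
    have hmdsub : md - x = (1/2 : ℝ) • (p - x) := by rw [hmd]; module
    have hψp : (⨆ j, (⟪G' j x, p - x⟫ + H j p - H j x)) =
        - (1 / (2*α) * ‖p - x‖^2) := by linarith
    have hψm : (⨆ j, (⟪G' j x, md - x⟫ + H j md - H j x)) ≤
        (1/2 : ℝ) * (⨆ j, (⟪G' j x, p - x⟫ + H j p - H j x)) := by
      apply ciSup_le
      intro j
      have hH : H j md ≤ (1/2 : ℝ) * H j p + (1/2 : ℝ) * H j x := by
        have h2 : H j ((1/2:ℝ) • p + (1/2:ℝ) • x) ≤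
            (1/2:ℝ) • H j p + (1/2:ℝ) • H j x :=
          (hHconv j).2 hp hx (by norm_num) (by norm_num) (by norm_num)
        rw [← hmd] at h2
        simpa [smul_eq_mul] using h2
      have hin : ⟪G' j x, md - x⟫ = (1/2 : ℝ) * ⟪G' j x, p - x⟫ := by
        rw [hmdsub, real_inner_smul_right]
      have hterm : ⟪G' j x, p - x⟫ + H j p - H j x ≤
          ⨆ j, (⟪G' j x, p - x⟫ + H j p - H j x) := le_ciSup (hbdd p) j
      linarith
    have hnorm : ‖md - x‖^2 = (1/4 : ℝ) * ‖p - x‖^2 := by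
      rw [hmdsub, norm_smul, mul_pow]
      norm_num
    have hfm : (0:ℝ) ≤ (⨆ j, (⟪G' j x, md - x⟫ + H j md - H j x))
        + 1 / (2 * α) * ‖md - x‖ ^ 2 := by
      have := hmin md hmdmem; linarith
    rw [hnorm] at hfm
    nlinarith [mul_pos hquadpos (pow_pos hpx' 2)]
  -- (b) → (a)
  have hba : (⨆ j, (⟪G' j x, p - x⟫ + H j p - H j x)) + 1 / (2 * α) * ‖p - x‖ ^ 2 = 0 →
      ¬ ∃ y ∈ dom, ∀ j, G j y + H j y < G j x + H j x := by
    intro hθ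
    rintro ⟨y, hy, hlt⟩
    have hyx : y ≠ x := by
      intro h
      exact absurd (hlt ⟨0, hm⟩) (by rw [h]; exact lt_irrefl _)
    have hyx' : (0:ℝ) < ‖y - x‖ := by rwa [norm_pos_iff, sub_ne_zero]
    have hcneg : (⨆ j, (⟪G' j x, y - x⟫ + H j y - H j x)) < 0 := by
      obtain ⟨j0, hj0⟩ := Finite.exists_max (fun j => ⟪G' j x, y - x⟫ + H j y - H j x)
      have h1 : (⨆ j, (⟪G' j x, y - x⟫ + H j y - H j x)) ≤
          ⟪G' j0 x, y - x⟫ + H j0 y - H j0 x := ciSup_le hj0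
      have h2 := grad_ineq (hGconv j0) x y (hGdiff j0 x)
      have h3 := hlt j0
      linarith
    obtain ⟨c, hc⟩ : ∃ c : ℝ, c = ⨆ j, (⟪G' j x, y - x⟫ + H j y - H j x) := ⟨_, rfl⟩
    rw [← hc] at hcneg
    obtain ⟨K, hK⟩ : ∃ K : ℝ, K = 1/(2*α) * ‖y - x‖^2 := ⟨_, rfl⟩
    have hKpos : 0 < K := hK ▸ mul_pos hquadpos (pow_pos hyx' 2)
    obtain ⟨t, ht⟩ : ∃ t : ℝ, t = min 1 (-c/(2*K)) := ⟨_, rfl⟩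
    have ht0 : 0 < t := ht ▸ lt_min one_pos (div_pos (by linarith) (by linarith))
    have ht1 : t ≤ 1 := ht ▸ min_le_left _ _
    obtain ⟨u, hu⟩ : ∃ u : EuclideanSpace ℝ (Fin n), u = x + t • (y - x) := ⟨_, rfl⟩
    have huc : u = (1 - t) • x + t • y := by rw [hu]; module
    have humem : u ∈ dom := by
      rw [huc]; exact hdomconv hx hy (by linarith) ht0.le (by ring)
    have husub : u - x = t • (y - x) := by rw [hu]; abel
    have hψu : (⨆ j, (⟪G' j x, u - x⟫ + H j u - H j x)) ≤ t * c := by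
      apply ciSup_le
      intro j
      have hH : H j u ≤ (1 - t) * H j x + t * H j y := by
        have h2 : H j ((1 - t) • x + t • y) ≤ (1 - t) • H j x + t • H j y :=
          (hHconv j).2 hx hy (by linarith) ht0.le (by ring)
        rw [← huc] at h2
        simpa [smul_eq_mul] using h2
      have hin : ⟪G' j x, u - x⟫ = t * ⟪G' j x, y - x⟫ := by
        rw [husub, real_inner_smul_right]
      have hterm : ⟪G' j x, y - x⟫ + H j y - H j x ≤ c :=
        hc ▸ le_ciSup (hbdd y) j
      nlinarith
    have hnorm : ‖u - x‖^2 = t^2 * ‖y - x‖^2 := by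
      rw [husub, norm_smul, Real.norm_eq_abs, mul_pow, sq_abs]
    have hfu : (0:ℝ) ≤ (⨆ j, (⟪G' j x, u - x⟫ + H j u - H j x))
        + 1 / (2 * α) * ‖u - x‖ ^ 2 := by
      have := hmin u humem; linarith
    rw [hnorm] at hfu
    have hKN : 1/(2*α) * (t^2 * ‖y - x‖^2) = t^2 * K := by rw [hK]; ring
    rw [hKN] at hfu
    have htK : t ≤ -c/(2*K) := ht ▸ min_le_right _ _
    have htK' : t * (2*K) ≤ -c := (le_div_iff₀ (by linarith)).mp htK
    nlinarith [mul_le_mul_of_nonneg_left htK' ht0.le, mul_pos ht0 (neg_pos.mpr hcneg)]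
  -- (a) → (b)
  have hab : (¬ ∃ y ∈ dom, ∀ j, G j y + H j y < G j x + H j x) →
      (⨆ j, (⟪G' j x, p - x⟫ + H j p - H j x)) + 1 / (2 * α) * ‖p - x‖ ^ 2 = 0 := by
    intro hpar
    by_contra hne
    have hθlt : (⨆ j, (⟪G' j x, p - x⟫ + H j p - H j x))
        + 1 / (2 * α) * ‖p - x‖ ^ 2 < 0 := lt_of_le_of_ne hθle hne
    have hquad : (0:ℝ) ≤ 1 / (2 * α) * ‖p - x‖ ^ 2 := by positivity
    have hψp : (⨆ j, (⟪G' j x, p - x⟫ + H j p - H j x)) < 0 := by linarith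
    have hjlt : ∀ j, ⟪G' j x, p - x⟫ + H j p - H j x < 0 :=
      fun j => lt_of_le_of_lt (le_ciSup (hbdd p) j) hψp
    have hder : ∀ j, HasDerivAt
        (fun t : ℝ => G j (x + t • (p - x)) + t * (H j p - H j x))
        (⟪G' j x, p - x⟫ + (H j p - H j x)) 0 :=
      fun j => (comp_hasDerivAt x (p - x) (hGdiff j x)).add
        (hasDerivAt_mul_const (H j p - H j x))
    have hev : ∀ᶠ t in 𝓝[>] (0:ℝ), ∀ j,
        G j (x + t • (p - x)) + t * (H j p - H j x)
          < G j (x + (0:ℝ) • (p - x)) + (0:ℝ) * (H j p - H j x) :=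
      eventually_all.mpr fun j =>
        eventually_lt_of_deriv_neg' (hder j) (by have := hjlt j; linarith)
    obtain ⟨t, htlt, ht01⟩ :=
      (hev.and (Ioo_mem_nhdsGT_of_mem (by norm_num : (0:ℝ) ∈ Set.Ico 0 1))).exists
    obtain ⟨y, hy⟩ : ∃ y : EuclideanSpace ℝ (Fin n), y = x + t • (p - x) := ⟨_, rfl⟩
    have hyc : y = (1 - t) • x + t • p := by rw [hy]; module
    have hymem : y ∈ dom := by
      rw [hyc]; exact hdomconv hx hp (by linarith [ht01.2]) ht01.1.le (by ring)
    refine hpar ⟨y, hymem, fun j => ?_⟩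
    have hH : H j y ≤ (1 - t) * H j x + t * H j p := by
      have h2 : H j ((1 - t) • x + t • p) ≤ (1 - t) • H j x + t • H j p :=
        (hHconv j).2 hx hp (by linarith [ht01.2]) ht01.1.le (by ring)
      rw [← hyc] at h2
      simpa [smul_eq_mul] using h2
    have hG := htlt j
    rw [← hy] at hG
    simp only [zero_smul, add_zero, zero_mul] at hG
    linarith
  exact ⟨⟨hab, hba⟩, ⟨hbc, hcb⟩⟩
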